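/- Let n ≥ 2 be an integer, P ≥ 0, w > 0, and define f(x) = (P + w)/((n−1)·(1−x)^{2 + 1/(n−1)}·(P·x + w)^{1 − 1/(n−1)}) for x ∈ [0,1). Suppose r_max ∈ (0,1) satisfies ∫_0^{r_max} f(x) dx = 1 and ∫_0^{r_max} x·f(x) dx = w^{1/(n−1)}. Then for every x ∈ [0, r_max], −x·P + (1−x)·(∫_0^x f(y) dy + ∫_x^{r_max} y·f(y) dy)^{n−1} = w. That is, the n-player CfR utility of a player who plays the pure action x while all n−1 opponents draw their actions independently with density f is constant equal to w on [0, r_max], so the symmetric profile with density f is an equilibrium (indifference) profile. -/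

import Mathlib

open MeasureTheory

theorem stmt9 (n : ℕ) (hn : 2 ≤ n) (P w : ℝ) (hP : 0 ≤ P) (hw : 0 < w)
    (f : ℝ → ℝ)
    (hf : ∀ x ∈ Set.Ico (0 : ℝ) 1,
      f x = (P + w) /
        (((n : ℝ) - 1) * (1 - x) ^ (2 + 1 / ((n : ℝ) - 1)) *
          (P * x + w) ^ (1 - 1 / ((n : ℝ) - 1))))
    (rmax : ℝ) (hrmax : rmax ∈ Set.Ioo (0 : ℝ) 1)
    (hnorm : (∫ x in (0 : ℝ)..rmax, f x) = 1)
    (hmean : (∫ x in (0 : ℝ)..rmax, x * f x) = w ^ (1 / ((n : ℝ) - 1))) :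
    ∀ x ∈ Set.Icc (0 : ℝ) rmax,
      -x * P + (1 - x) *
        ((∫ y in (0 : ℝ)..x, f y) + ∫ y in x..rmax, y * f y) ^ (n - 1) = w := by
  have hn1 : (1:ℝ) ≤ (n:ℝ) - 1 := by
    have : (2:ℝ) ≤ (n:ℝ) := by exact_mod_cast hn
    linarith
  have hn0 : (n:ℝ) - 1 ≠ 0 := by linarith
  set c : ℝ := 1 / ((n:ℝ) - 1) with hc
  have hcpos : 0 < c := by positivity
  have hcount : ((n - 1 : ℕ) : ℝ) = (n:ℝ) - 1 := by
    have : 1 ≤ n := by omega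
    push_cast [Nat.cast_sub this]
    ring
  set g : ℝ → ℝ := fun x => ((P * x + w) / (1 - x)) ^ c with hg
  -- positivity facts
  have hAB : ∀ x ∈ Set.Icc (0:ℝ) rmax, 0 < P * x + w ∧ 0 < 1 - x := by
    intro x hx
    constructor
    · have : 0 ≤ P * x := mul_nonneg hP hx.1
      linarith
    · have : x < 1 := lt_of_le_of_lt hx.2 hrmax.2
      linarith
  -- derivative
  have hderiv : ∀ x ∈ Set.Icc (0:ℝ) rmax, HasDerivAt g ((1 - x) * f x) x := by
    intro x hx
    obtain ⟨hA, hB⟩ := hAB x hx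
    have hx1 : x < 1 := by linarith
    have hb : 0 < (P * x + w) / (1 - x) := div_pos hA hB
    have hinner : HasDerivAt (fun y => (P * y + w) / (1 - y))
        ((P + w) / (1 - x) ^ 2) x := by
      have h1 : HasDerivAt (fun y : ℝ => P * y + w) P x := by
        simpa using ((hasDerivAt_id x).const_mul P).add_const w
      have h2 : HasDerivAt (fun y : ℝ => 1 - y) (-1) x := by
        simpa using (hasDerivAt_id x).const_sub 1
      have := h1.div h2 (by linarith)
      refine this.congr_deriv ?_
      ring
    have houter := Real.hasDerivAt_rpow_const (x := (P * x + w) / (1 - x))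
      (p := c) (Or.inl hb.ne')
    have hcomp := houter.comp x hinner
    refine hcomp.congr_deriv ?_
    symm
    rw [hf x ⟨hx.1, hx1⟩]
    have hE : ((P * x + w) / (1 - x)) ^ (c - 1)
        = ((P * x + w) ^ (1 - c))⁻¹ * (1 - x) ^ ((3:ℝ)) / (1 - x) ^ (2 + c) := by
      rw [Real.div_rpow hA.le hB.le, show c - 1 = -(1 - c) by ring,
        Real.rpow_neg hA.le, Real.rpow_neg hB.le]
      rw [div_eq_div_iff (by positivity) (Real.rpow_pos_of_pos hB _).ne']
      have h4 : (1 - x) ^ ((3:ℝ)) = (1 - x) ^ (2 + c) * (1 - x) ^ (1 - c) := by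
        rw [← Real.rpow_add hB]; norm_num
      rw [h4]
      have h5 : ((1 - x) ^ (1 - c)) ≠ 0 := (Real.rpow_pos_of_pos hB _).ne'
      field_simp
    rw [hE]
    have h3 : (1 - x) ^ ((3:ℝ)) = (1 - x) ^ (3:ℕ) := by
      rw [← Real.rpow_natCast]; norm_num
    rw [h3]
    have hApow : (0:ℝ) < (P * x + w) ^ (1 - c) := Real.rpow_pos_of_pos hA _
    have hBpow : (0:ℝ) < (1 - x) ^ (2 + c) := Real.rpow_pos_of_pos hB _
    rw [hc]
    field_simp
  -- continuity of f on [0, rmax]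
  have hcontf : ContinuousOn f (Set.Icc 0 rmax) := by
    have : ContinuousOn (fun x => (P + w) /
        (((n : ℝ) - 1) * (1 - x) ^ (2 + c) * (P * x + w) ^ (1 - c)))
        (Set.Icc 0 rmax) := by
      intro x hx
      obtain ⟨hA, hB⟩ := hAB x hx
      apply ContinuousAt.continuousWithinAt
      have k1 : ContinuousAt (fun y : ℝ => (1 - y) ^ (2 + c)) x :=
        (by fun_prop : ContinuousAt (fun y : ℝ => 1 - y) x).rpow_const (Or.inl hB.ne')
      have k2 : ContinuousAt (fun y : ℝ => (P * y + w) ^ (1 - c)) x :=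
        (by fun_prop : ContinuousAt (fun y : ℝ => P * y + w) x).rpow_const (Or.inl hA.ne')
      apply ContinuousAt.div continuousAt_const
      · exact (continuousAt_const.mul k1).mul k2
      · have h1 : (0:ℝ) < (1 - x) ^ (2 + c) := Real.rpow_pos_of_pos hB _
        have h2 : (0:ℝ) < (P * x + w) ^ (1 - c) := Real.rpow_pos_of_pos hA _
        positivity
    exact this.congr (fun x hx => hf x ⟨hx.1, lt_of_le_of_lt hx.2 hrmax.2⟩)
  have hcontyf : ContinuousOn (fun y => y * f y) (Set.Icc 0 rmax) :=
    (continuousOn_id).mul hcontf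
  have hcont1yf : ContinuousOn (fun y => (1 - y) * f y) (Set.Icc 0 rmax) :=
    (by fun_prop : ContinuousOn (fun y : ℝ => 1 - y) (Set.Icc 0 rmax)).mul hcontf
  intro x hx
  have hsub : Set.uIcc 0 x ⊆ Set.Icc 0 rmax := by
    rw [Set.uIcc_of_le hx.1]
    exact Set.Icc_subset_Icc le_rfl hx.2
  have hsub2 : Set.uIcc x rmax ⊆ Set.Icc 0 rmax := by
    rw [Set.uIcc_of_le hx.2]
    exact Set.Icc_subset_Icc hx.1 le_rfl
  have hif : IntervalIntegrable f volume 0 x :=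
    (hcontf.mono hsub).intervalIntegrable
  have hiyf : IntervalIntegrable (fun y => y * f y) volume 0 x :=
    (hcontyf.mono hsub).intervalIntegrable
  have hiyf2 : IntervalIntegrable (fun y => y * f y) volume x rmax :=
    (hcontyf.mono hsub2).intervalIntegrable
  -- FTC
  have hFTC : (∫ y in (0:ℝ)..x, (1 - y) * f y) = g x - g 0 := by
    apply intervalIntegral.integral_eq_sub_of_hasDerivAt
    · intro y hy
      exact hderiv y (hsub hy)
    · exact (hcont1yf.mono hsub).intervalIntegrable
  have hg0 : g 0 = w ^ c := by
    show ((P * 0 + w) / (1 - 0)) ^ c = w ^ c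
    norm_num
  have hsplit : (∫ y in x..rmax, y * f y) =
      w ^ c - ∫ y in (0:ℝ)..x, y * f y := by
    have := intervalIntegral.integral_add_adjacent_intervals hiyf hiyf2
    rw [hmean] at this
    linarith
  have hcomb : (∫ y in (0 : ℝ)..x, f y) + (∫ y in x..rmax, y * f y) = g x := by
    rw [hsplit]
    have : (∫ y in (0:ℝ)..x, f y) - (∫ y in (0:ℝ)..x, y * f y)
        = ∫ y in (0:ℝ)..x, (1 - y) * f y := by
      rw [← intervalIntegral.integral_sub hif hiyf]
      congr 1
      ext y
      ring
    rw [hFTC] at this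
    rw [hg0] at *
    linarith
  rw [hcomb]
  obtain ⟨hA, hB⟩ := hAB x hx
  have hb : 0 < (P * x + w) / (1 - x) := div_pos hA hB
  have hpow : (g x) ^ (n - 1) = (P * x + w) / (1 - x) := by
    rw [hg]
    rw [← Real.rpow_natCast (((P * x + w) / (1 - x)) ^ c) (n - 1),
      ← Real.rpow_mul hb.le, hcount]
    rw [show c * ((n:ℝ) - 1) = 1 by rw [hc]; field_simp, Real.rpow_one]
  rw [hpow]
  field_simp
  ring
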